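/- arXiv:2510.07530 — 2 statements merged into one kernel-verified Lean document; each statement's English description precedes it below -/
import Mathlib

section
/- Let A be a nonzero polynomial over F₂ with Collatz sequences (A_j). Then there exist a natural number m and natural numbers ℓ and d with d = ℓ + 2 such that for every k ≥ m one has deg(A_{2k+1}) = ℓ, deg(A_{2k}) = d, a_{2k} = 1 and b_{2k} = 1. -/
open Polynomial

/-- The analogue of 3 = first odd number > 1 : the first odd binary polynomial besides 1. -/
noncomputable def M1 : Polynomial (ZMod 2) := X ^ 2 + X + 1

/-- Valuation at `x` : multiplicity of the root 0. -/
noncomputable def valX (S : Polynomial (ZMod 2)) : ℕ := S.rootMultiplicity 0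

/-- Valuation at `x + 1` : multiplicity of the root 1 (note `X - 1 = X + 1` in characteristic 2). -/
noncomputable def valX1 (S : Polynomial (ZMod 2)) : ℕ := S.rootMultiplicity 1

/-- The odd part of a polynomial: `S / (x^{val_x S} (x+1)^{val_{x+1} S})`. -/
noncomputable def oddPart (S : Polynomial (ZMod 2)) : Polynomial (ZMod 2) :=
  S / (X ^ valX S * (X + 1) ^ valX1 S)

/-- The Collatz sequences `(A_j)` associated with `A`:
`A₀ = A`, `A_{2k+1} = oddPart (A_{2k})`, `A_{2k+2} = 1 + M₁ · A_{2k+1}`. -/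
noncomputable def collatz (A : Polynomial (ZMod 2)) : ℕ → Polynomial (ZMod 2)
  | 0 => A
  | j + 1 => if j % 2 = 0 then oddPart (collatz A j) else 1 + M1 * collatz A j

/-! ### Auxiliary lemmas -/

lemma zmod2_eq_one {x : ZMod 2} (h : x ≠ 0) : x = 1 := by
  revert h; revert x; decide

/-- The fundamental factorization `S = X^a (X+1)^b · oddPart S` with the odd part odd. -/
lemma factor (S : Polynomial (ZMod 2)) (hS : S ≠ 0) :
    S = X ^ valX S * (X + 1) ^ valX1 S * oddPart S ∧ (oddPart S).eval 0 = 1 ∧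
      (oddPart S).eval 1 = 1 ∧ oddPart S ≠ 0 ∧
      S.natDegree = valX S + valX1 S + (oddPart S).natDegree := by
  have hX : (X - C 0 : Polynomial (ZMod 2)) = X := by simp
  have hX1 : (X - C 1 : Polynomial (ZMod 2)) = X + 1 := by
    rw [CharTwo.sub_eq_add, map_one]
  set a := valX S with ha
  set b := valX1 S with hb
  have hdvd1 : (X : Polynomial (ZMod 2)) ^ a ∣ S := by
    rw [← hX]; exact pow_rootMultiplicity_dvd S 0
  obtain ⟨U, hU⟩ := hdvd1
  have hXne : (X : Polynomial (ZMod 2)) ≠ 0 := X_ne_zero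
  have hX1ne : (X + 1 : Polynomial (ZMod 2)) ≠ 0 := by
    rw [← hX1]; exact X_sub_C_ne_zero 1
  have hUne : U ≠ 0 := by rintro rfl; simp [hU] at hS
  have hrmXa0 : rootMultiplicity 0 ((X : Polynomial (ZMod 2)) ^ a) = a := by
    rw [← hX]; exact rootMultiplicity_X_sub_C_pow 0 a
  have hrmXa1 : rootMultiplicity 1 ((X : Polynomial (ZMod 2)) ^ a) = 0 := by
    apply rootMultiplicity_eq_zero; simp [IsRoot]
  have hU0 : rootMultiplicity 0 U = 0 := by
    have h2 := rootMultiplicity_mul (x := (0 : ZMod 2)) (hU ▸ hS)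
    rw [hrmXa0, ← hU] at h2
    have : rootMultiplicity 0 S = a := ha.symm
    omega
  have hbU : rootMultiplicity 1 U = b := by
    have h2 := rootMultiplicity_mul (x := (1 : ZMod 2)) (hU ▸ hS)
    rw [hrmXa1, ← hU] at h2
    have : rootMultiplicity 1 S = b := hb.symm
    omega
  have hdvd2 : (X + 1 : Polynomial (ZMod 2)) ^ b ∣ U := by
    rw [← hX1, ← hbU]; exact pow_rootMultiplicity_dvd U 1
  obtain ⟨T, hT⟩ := hdvd2
  have hTne : T ≠ 0 := by rintro rfl; simp [hT] at hUne
  have hT1 : rootMultiplicity 1 T = 0 := by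
    have h2 := rootMultiplicity_mul (x := (1 : ZMod 2)) (hT ▸ hUne)
    have h3 : rootMultiplicity 1 ((X + 1 : Polynomial (ZMod 2)) ^ b) = b := by
      rw [← hX1]; exact rootMultiplicity_X_sub_C_pow 1 b
    rw [h3, ← hT] at h2
    omega
  have hTe1 : T.eval 1 ≠ 0 := by
    intro h; have := rootMultiplicity_pos hTne (x := (1 : ZMod 2))
    rw [hT1] at this; exact absurd (this.mpr h) (by omega)
  have hTe0 : T.eval 0 ≠ 0 := by
    intro h
    have hU0' : U.eval 0 = 0 := by simp [hT, h]
    have := rootMultiplicity_pos hUne (x := (0 : ZMod 2))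
    rw [hU0] at this; exact absurd (this.mpr hU0') (by omega)
  have hfac : S = X ^ a * (X + 1) ^ b * T := by rw [hU, hT]; ring
  have hop : oddPart S = T := by
    have : oddPart S = S / (X ^ a * (X + 1) ^ b) := rfl
    rw [this, hfac, mul_div_cancel_left₀ _ (mul_ne_zero (pow_ne_zero _ hXne) (pow_ne_zero _ hX1ne))]
  rw [hop]
  refine ⟨hfac, zmod2_eq_one hTe0, zmod2_eq_one hTe1, hTne, ?_⟩
  rw [hfac, natDegree_mul (mul_ne_zero (pow_ne_zero _ hXne) (pow_ne_zero _ hX1ne)) hTne,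
    natDegree_mul (pow_ne_zero _ hXne) (pow_ne_zero _ hX1ne),
    natDegree_pow, natDegree_pow, natDegree_X]
  have : (X + 1 : Polynomial (ZMod 2)).natDegree = 1 := by
    rw [← hX1]; exact natDegree_X_sub_C 1
  rw [this]; ring

lemma M1_natDegree : M1.natDegree = 2 := by unfold M1; compute_degree!

lemma M1_ne_zero : M1 ≠ 0 := by
  intro h
  have : M1.natDegree = 0 := by rw [h]; simp
  rw [M1_natDegree] at this; omega

lemma M1_eval0 : M1.eval 0 = 1 := by simp [M1]

lemma M1_eval1 : M1.eval 1 = 1 := by simp [M1]; decide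

/-- The step `B ↦ 1 + M₁ B` applied to an odd polynomial. -/
lemma step (B : Polynomial (ZMod 2)) (hB : B ≠ 0) (h0 : B.eval 0 = 1) (h1 : B.eval 1 = 1) :
    (1 + M1 * B) ≠ 0 ∧ (1 + M1 * B).natDegree = B.natDegree + 2 ∧
      (1 + M1 * B).eval 0 = 0 ∧ (1 + M1 * B).eval 1 = 0 := by
  have hMB : M1 * B ≠ 0 := mul_ne_zero M1_ne_zero hB
  have hdMB : (M1 * B).natDegree = B.natDegree + 2 := by
    rw [natDegree_mul M1_ne_zero hB, M1_natDegree]; ring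
  have hlt : (1 : Polynomial (ZMod 2)).degree < (M1 * B).degree := by
    rw [degree_one, degree_eq_natDegree hMB, hdMB]
    exact_mod_cast Nat.pos_of_ne_zero (by omega)
  have hdeg : (1 + M1 * B).degree = (M1 * B).degree := degree_add_eq_right_of_degree_lt hlt
  have hne : (1 + M1 * B) ≠ 0 := by
    intro h
    rw [h, degree_zero, degree_eq_natDegree hMB] at hdeg
    exact (by simp : (⊥ : WithBot ℕ) ≠ _) hdeg
  refine ⟨hne, ?_, ?_, ?_⟩
  · rw [natDegree_eq_of_degree_eq hdeg, hdMB]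
  · simp [M1_eval0, h0]; decide
  · simp [M1_eval1, h1]; decide

lemma collatz_odd_step (A : Polynomial (ZMod 2)) (k : ℕ) :
    collatz A (2 * k + 1) = oddPart (collatz A (2 * k)) := by
  show collatz A (2 * k + 1) = _
  rw [collatz]
  simp [Nat.mul_mod_right]

lemma collatz_even_step (A : Polynomial (ZMod 2)) (k : ℕ) :
    collatz A (2 * k + 2) = 1 + M1 * collatz A (2 * k + 1) := by
  show collatz A ((2 * k + 1) + 1) = _
  rw [collatz]
  have : (2 * k + 1) % 2 = 1 := by omega
  simp [this]

/-- A nonincreasing sequence of naturals is eventually constant. -/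
lemma stab : ∀ (N : ℕ) (f : ℕ → ℕ), f 0 ≤ N → (∀ k, f (k + 1) ≤ f k) →
    ∃ m, ∀ k ≥ m, f k = f m := by
  intro N
  induction N with
  | zero =>
    intro f h0 hd
    refine ⟨0, fun k _ => ?_⟩
    have : ∀ k, f k ≤ f 0 := by
      intro k; induction k with
      | zero => exact le_refl _
      | succ n ih => exact le_trans (hd n) ih
    have := this k; omega
  | succ N ih =>
    intro f h0 hd
    have hmono : ∀ k, f k ≤ f 0 := by
      intro k; induction k with
      | zero => exact le_refl _
      | succ n ihn => exact le_trans (hd n) ihn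
    by_cases hc : ∀ k, f k = f 0
    · exact ⟨0, fun k _ => by rw [hc k, hc 0]⟩
    · push_neg at hc
      obtain ⟨k0, hk0⟩ := hc
      have hk0' : f k0 < f 0 := lt_of_le_of_ne (hmono k0) hk0
      obtain ⟨m', hm'⟩ := ih (fun j => f (k0 + j)) (by simp; omega) (fun j => hd (k0 + j))
      refine ⟨k0 + m', fun k hk => ?_⟩
      have := hm' (k - k0) (by omega)
      simpa [show k0 + (k - k0) = k by omega] using this

/-- eventually the degrees stabilize: there are `m, ℓ, d` with `d = ℓ + 2` such
that for all `k ≥ m`, `deg A_{2k+1} = ℓ`, `deg A_{2k} = d`, `a_{2k} = 1` and `b_{2k} = 1`. -/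
theorem degrees_eventually_constant (A : Polynomial (ZMod 2)) (hA : A ≠ 0) :
    ∃ (m ℓ d : ℕ), d = ℓ + 2 ∧ ∀ k ≥ m,
      (collatz A (2 * k + 1)).natDegree = ℓ ∧ (collatz A (2 * k)).natDegree = d ∧
      valX (collatz A (2 * k)) = 1 ∧ valX1 (collatz A (2 * k)) = 1 := by
  -- all even-indexed terms are nonzero
  have heven : ∀ k, collatz A (2 * k) ≠ 0 := by
    intro k
    induction k with
    | zero => exact hA
    | succ n ih =>
      obtain ⟨-, h0, h1, hne, -⟩ := factor _ ih
      rw [← collatz_odd_step] at h0 h1 hne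
      have := (step _ hne h0 h1).1
      rw [show 2 * (n + 1) = 2 * n + 2 by ring, collatz_even_step]
      exact this
  -- odd-indexed terms are odd and nonzero
  have hodd : ∀ k, (collatz A (2 * k + 1)).eval 0 = 1 ∧ (collatz A (2 * k + 1)).eval 1 = 1 ∧
      collatz A (2 * k + 1) ≠ 0 := by
    intro k
    obtain ⟨-, h0, h1, hne, -⟩ := factor _ (heven k)
    rw [← collatz_odd_step] at h0 h1 hne
    exact ⟨h0, h1, hne⟩
  -- key relation
  have keyrel : ∀ k,
      (collatz A (2 * k + 1)).natDegree + 2 =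
        valX (collatz A (2 * (k + 1))) + valX1 (collatz A (2 * (k + 1)))
          + (collatz A (2 * (k + 1) + 1)).natDegree ∧
      1 ≤ valX (collatz A (2 * (k + 1))) ∧ 1 ≤ valX1 (collatz A (2 * (k + 1))) ∧
      (collatz A (2 * (k + 1))).natDegree = (collatz A (2 * k + 1)).natDegree + 2 := by
    intro k
    obtain ⟨h0, h1, hne⟩ := hodd k
    obtain ⟨hCne, hCdeg, hC0, hC1⟩ := step _ hne h0 h1
    have hCeq : collatz A (2 * (k + 1)) = 1 + M1 * collatz A (2 * k + 1) := by
      rw [show 2 * (k + 1) = 2 * k + 2 by ring, collatz_even_step]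
    obtain ⟨-, -, -, -, hdegC⟩ := factor _ (heven (k + 1))
    rw [collatz_odd_step A (k + 1)]
    have hC : (collatz A (2 * (k + 1))).natDegree = (collatz A (2 * k + 1)).natDegree + 2 := by
      rw [hCeq]; exact hCdeg
    refine ⟨by omega, ?_, ?_, hC⟩
    · exact (rootMultiplicity_pos (heven (k + 1))).mpr (by rw [hCeq]; exact hC0)
    · exact (rootMultiplicity_pos (heven (k + 1))).mpr (by rw [hCeq]; exact hC1)
  -- degree sequence is nonincreasing, hence eventually constant
  set f : ℕ → ℕ := fun k => (collatz A (2 * k + 1)).natDegree with hf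
  have hdec : ∀ k, f (k + 1) ≤ f k := by
    intro k
    obtain ⟨hrel, ha, hb, -⟩ := keyrel k
    simp only [hf]
    omega
  obtain ⟨m₀, hm₀⟩ := stab (f 0) f le_rfl hdec
  refine ⟨m₀ + 1, f m₀, f m₀ + 2, rfl, fun k hk => ?_⟩
  obtain ⟨j, rfl⟩ : ∃ j, k = j + 1 := ⟨k - 1, by omega⟩
  have hj : j ≥ m₀ := by omega
  obtain ⟨hrel, ha, hb, hC⟩ := keyrel j
  have h1 : f (j + 1) = f m₀ := hm₀ (j + 1) (by omega)
  have h2 : f j = f m₀ := hm₀ j hj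
  have hfj1 : (collatz A (2 * (j + 1) + 1)).natDegree = f (j + 1) := rfl
  have hfj : (collatz A (2 * j + 1)).natDegree = f j := rfl
  refine ⟨by omega, by omega, by omega, by omega⟩
end

section
/- Let φ : F₂[x] → F₂[x] be the ring automorphism determined by x ↦ x + 1. Let A be a nonzero polynomial over F₂ with Collatz sequences (A_j), valuations (a_{2k}) and (b_{2k}), and let (A'_j), (a'_{2k}), (b'_{2k}) be the Collatz sequences and valuations of φ(A). Then A'_j = φ(A_j) for every j ≥ 0, and a'_{2k} = b_{2k}, b'_{2k} = a_{2k} for every k ≥ 0. -/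
open Polynomial

lemma h2' : (2 : Polynomial (ZMod 2)) = 0 := by
  have h : ((1:ZMod 2) + 1) = 0 := rfl
  calc (2:Polynomial (ZMod 2)) = C 1 + C 1 := by norm_num
    _ = C ((1:ZMod 2) + 1) := by rw [C_add]
    _ = 0 := by rw [h, C_0]

lemma XC1 : (X - 1 : Polynomial (ZMod 2)) = X + 1 := by linear_combination -h2'

lemma phiX1 (φ : Polynomial (ZMod 2) ≃+* Polynomial (ZMod 2)) (hφ : φ X = X + 1) :
    φ (X + 1) = X := by
  rw [map_add, map_one, hφ]; linear_combination h2'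

lemma dvd_iff_map (φ : Polynomial (ZMod 2) ≃+* Polynomial (ZMod 2))
    (p q : Polynomial (ZMod 2)) : φ p ∣ φ q ↔ p ∣ q := by
  constructor
  · rintro ⟨c, hc⟩
    exact ⟨φ.symm c, φ.injective (by simp [hc])⟩
  · exact fun h => by obtain ⟨c, hc⟩ := h; exact ⟨φ c, by rw [hc, map_mul]⟩

lemma valX_phi (φ : Polynomial (ZMod 2) ≃+* Polynomial (ZMod 2)) (hφ : φ X = X + 1)
    (S : Polynomial (ZMod 2)) : valX (φ S) = valX1 S := by
  by_cases hS : S = 0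
  · simp [hS, valX, valX1]
  · have hφS : φ S ≠ 0 := by
      simpa using (EmbeddingLike.map_ne_zero_iff (f := φ)).mpr hS
    apply le_antisymm
    · have h1 : (X - C (0:ZMod 2)) ^ (valX (φ S)) ∣ φ S := pow_rootMultiplicity_dvd _ _
      have h2 : φ ((X + 1) ^ valX (φ S)) ∣ φ S := by
        rw [map_pow, phiX1 φ hφ]; simpa using h1
      rw [dvd_iff_map] at h2
      exact (le_rootMultiplicity_iff hS).mpr (by simpa [XC1] using h2)
    · have h1 : (X - C (1:ZMod 2)) ^ (valX1 S) ∣ S := pow_rootMultiplicity_dvd _ _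
      have h2 : φ ((X + 1) ^ valX1 S) ∣ φ S := (dvd_iff_map φ _ _).mpr (by simpa [XC1] using h1)
      rw [map_pow, phiX1 φ hφ] at h2
      exact (le_rootMultiplicity_iff hφS).mpr (by simpa using h2)

lemma valX1_phi (φ : Polynomial (ZMod 2) ≃+* Polynomial (ZMod 2)) (hφ : φ X = X + 1)
    (S : Polynomial (ZMod 2)) : valX1 (φ S) = valX S := by
  by_cases hS : S = 0
  · simp [hS, valX, valX1]
  · have hφS : φ S ≠ 0 := by
      simpa using (EmbeddingLike.map_ne_zero_iff (f := φ)).mpr hS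
    apply le_antisymm
    · have h1 : (X - C (1:ZMod 2)) ^ (valX1 (φ S)) ∣ φ S := pow_rootMultiplicity_dvd _ _
      have h2 : φ (X ^ valX1 (φ S)) ∣ φ S := by
        rw [map_pow, hφ]; simpa [XC1] using h1
      rw [dvd_iff_map] at h2
      exact (le_rootMultiplicity_iff hS).mpr (by simpa using h2)
    · have h1 : (X - C (0:ZMod 2)) ^ (valX S) ∣ S := pow_rootMultiplicity_dvd _ _
      have h2 : φ (X ^ valX S) ∣ φ S := (dvd_iff_map φ _ _).mpr (by simpa using h1)
      rw [map_pow, hφ] at h2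
      exact (le_rootMultiplicity_iff hφS).mpr (by simpa [XC1] using h2)

lemma X1_ne : (X + 1 : Polynomial (ZMod 2)) ≠ 0 := by
  intro h
  have := congrArg (eval 0) h
  simp at this

lemma d_ne (a b : ℕ) : (X ^ a * (X + 1) ^ b : Polynomial (ZMod 2)) ≠ 0 :=
  mul_ne_zero (pow_ne_zero _ X_ne_zero) (pow_ne_zero _ X1_ne)

lemma d_dvd (S : Polynomial (ZMod 2)) : X ^ valX S * (X + 1) ^ valX1 S ∣ S := by
  have ha : (X : Polynomial (ZMod 2)) ^ valX S ∣ S := by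
    simpa [valX] using pow_rootMultiplicity_dvd S (0 : ZMod 2)
  have hb : (X + 1 : Polynomial (ZMod 2)) ^ valX1 S ∣ S := by
    simpa [XC1, valX1] using pow_rootMultiplicity_dvd S (1 : ZMod 2)
  have hcop : IsCoprime (X : Polynomial (ZMod 2)) (X + 1) :=
    ⟨1, 1, by linear_combination X * h2'⟩
  exact (hcop.pow).mul_dvd ha hb

lemma oddPart_eq (S : Polynomial (ZMod 2)) :
    X ^ valX S * (X + 1) ^ valX1 S * oddPart S = S :=
  EuclideanDomain.mul_div_cancel' (d_ne _ _) (d_dvd S)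

lemma oddPart_phi (φ : Polynomial (ZMod 2) ≃+* Polynomial (ZMod 2)) (hφ : φ X = X + 1)
    (S : Polynomial (ZMod 2)) : oddPart (φ S) = φ (oddPart S) := by
  have key : φ S = X ^ valX1 S * (X + 1) ^ valX S * φ (oddPart S) := by
    conv_lhs => rw [← oddPart_eq S]
    rw [map_mul, map_mul, map_pow, map_pow, hφ, phiX1 φ hφ]
    ring
  rw [oddPart, valX_phi φ hφ, valX1_phi φ hφ, key,
    mul_div_cancel_left₀ _ (d_ne _ _)]

lemma phiM1 (φ : Polynomial (ZMod 2) ≃+* Polynomial (ZMod 2)) (hφ : φ X = X + 1) :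
    φ M1 = M1 := by
  unfold M1
  rw [map_add, map_add, map_one, map_pow, hφ]
  linear_combination (X + 1) * h2'

/-- the automorphism `φ : x ↦ x + 1` of `𝔽₂[x]` commutes with the Collatz
transformations: `A'_j = φ(A_j)` for all `j`, and the valuations get swapped:
`a'_{2k} = b_{2k}`, `b'_{2k} = a_{2k}`. -/
theorem collatz_swap_automorphism
    (φ : Polynomial (ZMod 2) ≃+* Polynomial (ZMod 2)) (hφ : φ X = X + 1)
    (A : Polynomial (ZMod 2)) (hA : A ≠ 0) :
    (∀ j : ℕ, collatz (φ A) j = φ (collatz A j)) ∧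
    (∀ k : ℕ, valX (collatz (φ A) (2 * k)) = valX1 (collatz A (2 * k)) ∧
      valX1 (collatz (φ A) (2 * k)) = valX (collatz A (2 * k))) := by
  have first : ∀ j : ℕ, collatz (φ A) j = φ (collatz A j) := by
    intro j
    induction j with
    | zero => rfl
    | succ j ih =>
      by_cases h : j % 2 = 0
      · simp [collatz, h, ih, oddPart_phi φ hφ]
      · simp [collatz, h, ih, map_add, map_mul, map_one, phiM1 φ hφ]
  refine ⟨first, fun k => ?_⟩
  rw [first]
  exact ⟨valX_phi φ hφ _, valX1_phi φ hφ _⟩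
end
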